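/- arXiv:2108.05742 — 5 statements merged into one kernel-verified Lean document; each statement's English description precedes it below -/
import Mathlib

section
/- Let q be a prime power and let X1 ∈ F_q^{r×s}, X2 ∈ F_q^{s×l}, X3 ∈ F_q^{r×l} be matrices with X1·X2 ≠ X3. If ν is drawn uniformly at random from F_q^l, then the probability that X1·(X2·ν) = X3·ν is at most 1/q. (Consequently Freivalds' algorithm returns False with probability at least 1 − 1/q on an incorrect multiplication, and always returns True when X1·X2 = X3.) -/
/-- Freivalds' check: if `X1 * X2 ≠ X3` over `F_q` and `ν ∈ F_q^l` is
drawn uniformly at random, then `X1 ⬝ (X2 ⬝ ν) = X3 ⬝ ν` holds with probability at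
most `1 / q`. -/
theorem freivalds_missed_detection_bound
    (q r s l : ℕ) (F : Type*) [Field F] [Fintype F] [DecidableEq F]
    (hq : Fintype.card F = q)
    (X1 : Matrix (Fin r) (Fin s) F) (X2 : Matrix (Fin s) (Fin l) F)
    (X3 : Matrix (Fin r) (Fin l) F) (h : X1 * X2 ≠ X3) :
    ((Finset.univ.filter (fun ν : Fin l → F =>
        X1.mulVec (X2.mulVec ν) = X3.mulVec ν)).card : ℝ)
      / (Fintype.card (Fin l → F) : ℝ) ≤ 1 / (q : ℝ) := by
  have hq2 : 2 ≤ q := hq ▸ Fintype.one_lt_card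
  classical
  set A := X1 * X2 - X3 with hAdef
  have hA0 : A ≠ 0 := sub_ne_zero.mpr h
  have hset : (Finset.univ.filter (fun ν : Fin l → F =>
        X1.mulVec (X2.mulVec ν) = X3.mulVec ν))
      = Finset.univ.filter (fun ν => ν ∈ LinearMap.ker A.mulVecLin) := by
    apply Finset.filter_congr
    intro ν _
    simp [hAdef, Matrix.sub_mulVec, Matrix.mulVec_mulVec, sub_eq_zero,
      LinearMap.mem_ker]
  rw [hset]
  have hcard : (Finset.univ.filter (fun ν => ν ∈ LinearMap.ker A.mulVecLin)).card
      = Fintype.card (LinearMap.ker A.mulVecLin) := by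
    rw [Fintype.card_subtype]
  -- kernel is a proper subspace
  have hne : LinearMap.ker A.mulVecLin ≠ ⊤ := by
    intro htop
    apply hA0
    ext i j
    have : A.mulVec (Pi.single j 1) = 0 := by
      have : Pi.single j (1 : F) ∈ LinearMap.ker A.mulVecLin := htop ▸ Submodule.mem_top
      simpa using this
    have := congrFun this i
    simpa [Matrix.mulVec_single] using this
  have hrank : Module.finrank F (LinearMap.ker A.mulVecLin) < l := by
    have := Submodule.finrank_lt hne
    simpa using this
  have hcard2 : Fintype.card (LinearMap.ker A.mulVecLin)
      = q ^ Module.finrank F (LinearMap.ker A.mulVecLin) := by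
    rw [← hq]; exact Module.card_eq_pow_finrank (K := F)
  have htot : (Fintype.card (Fin l → F) : ℝ) = (q : ℝ) ^ l := by
    simp [hq]
  rw [hcard, hcard2, htot]
  have hqpos : (0 : ℝ) < q := by positivity
  rw [div_le_div_iff₀ (by positivity) hqpos]
  push_cast
  rw [one_mul, ← pow_succ]
  exact pow_le_pow_right₀ (by exact_mod_cast hq2.trans' (by norm_num)) hrank
end

section
/- Let q be a prime power and let F(x) ∈ F_q[x]^{r×s}, G(x) ∈ F_q[x]^{s×l}, H(x) ∈ F_q[x]^{r×l} be matrices of polynomials over F_q with H(x) ≠ F(x)·G(x). Let D be a natural number such that every entry of H(x) and every entry of F(x)·G(x) has degree at most D, and assume D + 2 ≤ q. Let B ⊂ F_q be a set with |B| ≤ D + 1. If α is drawn uniformly at random from F_q \ B and, independently, ν is drawn uniformly at random from F_q^l, then the probability that H(α)·ν = F(α)·G(α)·ν is at most D/(q − D − 1) + 1/q − (D/(q − D − 1))·(1/q). -/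
open scoped Matrix

/-- Entrywise evaluation of a matrix of polynomials at a point. -/
def Matrix.evalPoly {m n F : Type*} [Semiring F]
    (P : Matrix m n (Polynomial F)) (γ : F) : Matrix m n F :=
  Matrix.of fun i j => (P i j).eval γ

section Aux

variable {F : Type*} [Field F] [Fintype F] [DecidableEq F]

/-- Counting the kernel of a nonzero linear functional given by dot product. -/
lemma dot_ker_card {l : ℕ} (c : Fin l → F) (j1 : Fin l) (hc : c j1 ≠ 0) :
    (Finset.univ.filter fun ν : Fin l → F => c ⬝ᵥ ν = 0).card * Fintype.card F
      = Fintype.card F ^ l := by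
  classical
  have h1 : (Finset.univ : Finset (Fin l → F)).card
      = ∑ y : F, (Finset.univ.filter fun ν : Fin l → F => c ⬝ᵥ ν = y).card :=
    Finset.card_eq_sum_card_fiberwise (fun x _ => Finset.mem_univ _)
  have h2 : ∀ y : F, (Finset.univ.filter fun ν : Fin l → F => c ⬝ᵥ ν = y).card
      = (Finset.univ.filter fun ν : Fin l → F => c ⬝ᵥ ν = 0).card := by
    intro y
    refine Finset.card_nbij' (fun ν => ν - Pi.single j1 (y / c j1))
      (fun ν => ν + Pi.single j1 (y / c j1)) ?_ ?_ ?_ ?_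
    · intro ν hν
      simp only [Finset.coe_filter, Set.mem_setOf_eq, Finset.mem_filter, Finset.mem_univ, true_and] at hν ⊢
      rw [dotProduct_sub, hν, dotProduct_single,
        mul_div_cancel₀ _ hc, sub_self]
    · intro ν hν
      simp only [Finset.coe_filter, Set.mem_setOf_eq, Finset.mem_filter, Finset.mem_univ, true_and] at hν ⊢
      rw [dotProduct_add, hν, dotProduct_single,
        mul_div_cancel₀ _ hc, zero_add]
    · intro ν _; simp
    · intro ν _; simp
  calc (Finset.univ.filter fun ν : Fin l → F => c ⬝ᵥ ν = 0).card * Fintype.card F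
      = ∑ y : F, (Finset.univ.filter fun ν : Fin l → F => c ⬝ᵥ ν = y).card := by
        rw [Finset.sum_congr rfl (fun y _ => h2 y), Finset.sum_const, Finset.card_univ,
          smul_eq_mul, mul_comm]
    _ = (Finset.univ : Finset (Fin l → F)).card := h1.symm
    _ = Fintype.card F ^ l := by
        rw [Finset.card_univ, Fintype.card_fun, Fintype.card_fin]

lemma root_filter_card {p : Polynomial F} (hp : p ≠ 0) :
    (Finset.univ.filter fun α : F => p.eval α = 0).card ≤ p.natDegree := by
  have hsub : (Finset.univ.filter fun α : F => p.eval α = 0) ⊆ p.roots.toFinset := by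
    intro a ha
    simp only [Finset.mem_filter, Finset.mem_univ, true_and] at ha
    simpa [Multiset.mem_toFinset, Polynomial.mem_roots hp, Polynomial.IsRoot] using ha
  exact le_trans (Finset.card_le_card hsub)
    (le_trans (Multiset.toFinset_card_le _) (Polynomial.card_roots' p))

omit [Fintype F] [DecidableEq F] in
lemma evalPoly_mul {r s l : ℕ} (Fp : Matrix (Fin r) (Fin s) (Polynomial F))
    (Gp : Matrix (Fin s) (Fin l) (Polynomial F)) (γ : F) :
    (Fp * Gp).evalPoly γ = Fp.evalPoly γ * Gp.evalPoly γ := by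
  ext i j
  simp [Matrix.evalPoly, Matrix.mul_apply, Polynomial.eval_finset_sum]

/-- The purely real-arithmetic tail of the bound. -/
lemma arith_tail (bR nR qR DR P : ℝ) (hq2 : 2 ≤ qR) (hDq : DR + 2 ≤ qR)
    (hn : qR - DR - 1 ≤ nR) (hb : bR ≤ DR) (hb0 : 0 ≤ bR) (hn1 : 1 ≤ nR) (hP : 0 < P) :
    bR * (P * qR) + (nR - bR) * P ≤
      (DR / (qR - DR - 1) + 1 / qR - DR / (qR - DR - 1) * (1 / qR)) * (nR * (P * qR)) := by
  have hden1 : (0 : ℝ) < qR - DR - 1 := by linarith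
  have hq0 : (0 : ℝ) < qR := by linarith
  have hD0 : (0 : ℝ) ≤ DR := le_trans hb0 hb
  have hT : bR ≤ DR / (qR - DR - 1) * nR := by
    calc bR ≤ DR := hb
      _ = DR / (qR - DR - 1) * (qR - DR - 1) := by field_simp
      _ ≤ DR / (qR - DR - 1) * nR := by
          apply mul_le_mul_of_nonneg_left hn
          positivity
  have hkey : bR * (qR - 1) ≤ DR / (qR - DR - 1) * nR * (qR - 1) :=
    mul_le_mul_of_nonneg_right hT (by linarith)
  have hexpand : (DR / (qR - DR - 1) + 1 / qR - DR / (qR - DR - 1) * (1 / qR)) * (nR * (P * qR))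
      = (DR / (qR - DR - 1) * nR * (qR - 1) + nR) * P := by
    field_simp
    ring
  rw [hexpand]
  have hLHS : bR * (P * qR) + (nR - bR) * P = (bR * (qR - 1) + nR) * P := by ring
  rw [hLHS]
  exact mul_le_mul_of_nonneg_right (by linarith) hP.le

end Aux

/-- Missed-detection bound for SRPM3's per-cluster security check:
with `H(x) ≠ F(x) * G(x)`, all entries of `H(x)` and `F(x) * G(x)` of degree at most
`D`, `D + 2 ≤ q`, and `|B| ≤ D + 1`, a uniformly random `α ∈ F_q \ B` together with an
independent uniformly random `ν ∈ F_q^l` satisfies `H(α) ν = F(α) G(α) ν` with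
probability at most `D/(q-D-1) + 1/q - (D/(q-D-1)) * (1/q)`. -/
theorem srpm3_cluster_check_missed_detection_bound
    (q r s l D : ℕ) (F : Type*) [Field F] [Fintype F] [DecidableEq F]
    (hq : Fintype.card F = q)
    (Fp : Matrix (Fin r) (Fin s) (Polynomial F))
    (Gp : Matrix (Fin s) (Fin l) (Polynomial F))
    (Hp : Matrix (Fin r) (Fin l) (Polynomial F))
    (hne : Hp ≠ Fp * Gp)
    (hdegH : ∀ i j, (Hp i j).natDegree ≤ D)
    (hdegFG : ∀ i j, ((Fp * Gp) i j).natDegree ≤ D)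
    (hD : D + 2 ≤ q)
    (B : Finset F) (hB : B.card ≤ D + 1) :
    ((((Finset.univ \ B) ×ˢ (Finset.univ : Finset (Fin l → F))).filter
        (fun p => (Hp.evalPoly p.1).mulVec p.2 =
          ((Fp.evalPoly p.1) * (Gp.evalPoly p.1)).mulVec p.2)).card : ℝ)
      / ((((Finset.univ \ B) ×ˢ (Finset.univ : Finset (Fin l → F))).card : ℝ))
      ≤ (D : ℝ) / ((q : ℝ) - D - 1) + 1 / (q : ℝ)
          - ((D : ℝ) / ((q : ℝ) - D - 1)) * (1 / (q : ℝ)) := by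
  classical
  set Δ : Matrix (Fin r) (Fin l) (Polynomial F) := Hp - Fp * Gp with hΔdef
  have hΔ : Δ ≠ 0 := sub_ne_zero.mpr hne
  obtain ⟨i0, j0, hij⟩ : ∃ i j, Δ i j ≠ 0 := by
    by_contra h
    push_neg at h
    exact hΔ (Matrix.ext fun i j => by simpa using h i j)
  set p0 : Polynomial F := Δ i0 j0 with hp0def
  have hp0 : p0 ≠ 0 := hij
  have hp0deg : p0.natDegree ≤ D := by
    have := Polynomial.natDegree_sub_le (Hp i0 j0) ((Fp * Gp) i0 j0)
    exact le_trans this (max_le (hdegH i0 j0) (hdegFG i0 j0))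
  have hcond : ∀ (α : F) (ν : Fin l → F),
      ((Hp.evalPoly α).mulVec ν = ((Fp.evalPoly α) * (Gp.evalPoly α)).mulVec ν)
        ↔ (Δ.evalPoly α).mulVec ν = 0 := by
    intro α ν
    have h1 : Δ.evalPoly α = Hp.evalPoly α - (Fp.evalPoly α) * (Gp.evalPoly α) := by
      rw [← evalPoly_mul]
      ext i j
      simp [Matrix.evalPoly, hΔdef, Matrix.sub_apply]
    rw [h1, Matrix.sub_mulVec, sub_eq_zero]
  set S : Finset F := Finset.univ \ B with hSdef
  set bigF := ((S ×ˢ (Finset.univ : Finset (Fin l → F))).filter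
      (fun p => (Hp.evalPoly p.1).mulVec p.2 =
        ((Fp.evalPoly p.1) * (Gp.evalPoly p.1)).mulVec p.2)) with hbigF
  set inner : F → Finset (Fin l → F) :=
    fun α => (Finset.univ.filter fun ν : Fin l → F => (Δ.evalPoly α).mulVec ν = 0)
    with hinnerdef
  have hsplit : bigF.card = ∑ α ∈ S, (inner α).card := by
    have hmaps : ∀ x ∈ bigF, x.1 ∈ S := by
      intro x hx
      rw [hbigF, Finset.mem_filter, Finset.mem_product] at hx
      exact hx.1.1
    rw [Finset.card_eq_sum_card_fiberwise hmaps]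
    refine Finset.sum_congr rfl fun α hα => ?_
    refine Finset.card_nbij' Prod.snd (fun ν => (α, ν)) ?_ ?_ ?_ ?_
    · intro x hx
      obtain ⟨hxbig, heq⟩ := Finset.mem_filter.mp hx
      obtain ⟨_, hcondx⟩ := Finset.mem_filter.mp hxbig
      refine Finset.mem_filter.mpr ⟨Finset.mem_univ _, ?_⟩
      rw [← heq]
      exact (hcond x.1 x.2).mp hcondx
    · intro ν hν
      have hν' := (Finset.mem_filter.mp hν).2
      refine Finset.mem_filter.mpr ⟨Finset.mem_filter.mpr
        ⟨Finset.mem_product.mpr ⟨hα, Finset.mem_univ _⟩, (hcond α ν).mpr hν'⟩, rfl⟩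
    · intro x hx
      have heq := (Finset.mem_filter.mp hx).2
      simp [← heq]
    · intro ν _; rfl
  have hq2 : 2 ≤ q := by omega
  have hq0 : 0 < q := by omega
  have hl : 0 < l := j0.pos
  have hinner_bound : ∀ α : F, (inner α).card ≤
      if p0.eval α = 0 then q ^ l else q ^ (l - 1) := by
    intro α
    split_ifs with h0
    · calc (inner α).card ≤ (Finset.univ : Finset (Fin l → F)).card :=
            Finset.card_le_card (Finset.filter_subset _ _)
        _ = q ^ l := by rw [Finset.card_univ, Fintype.card_fun, Fintype.card_fin, hq]
    · have hc : (Δ.evalPoly α) i0 j0 ≠ 0 := by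
        simpa [Matrix.evalPoly] using h0
      have hsub : inner α ⊆
          (Finset.univ.filter fun ν : Fin l → F => ((Δ.evalPoly α) i0) ⬝ᵥ ν = 0) := by
        intro ν hν
        simp only [hinnerdef, Finset.mem_filter, Finset.mem_univ, true_and] at hν ⊢
        have := congrFun hν i0
        simpa [Matrix.mulVec] using this
      have hker := dot_ker_card ((Δ.evalPoly α) i0) j0 hc
      rw [hq] at hker
      have hpow : q ^ l = q ^ (l - 1) * q := by
        rw [← pow_succ]; congr 1; omega
      have hKeq : (Finset.univ.filter
          fun ν : Fin l → F => ((Δ.evalPoly α) i0) ⬝ᵥ ν = 0).card = q ^ (l - 1) := by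
        apply Nat.eq_of_mul_eq_mul_right hq0
        rw [hker, hpow]
      exact hKeq ▸ Finset.card_le_card hsub
  set bad : Finset F := S.filter (fun α => p0.eval α = 0) with hbaddef
  set good : Finset F := S.filter (fun α => ¬p0.eval α = 0) with hgooddef
  have hpart : bad.card + good.card = S.card :=
    Finset.card_filter_add_card_filter_not (p := fun α => p0.eval α = 0)
  have hbadD : bad.card ≤ D := by
    refine le_trans (le_trans (Finset.card_le_card ?_) (root_filter_card hp0)) hp0deg
    intro a ha
    rw [hbaddef, Finset.mem_filter] at ha
    simp [ha.2]
  have hcount : bigF.card ≤ bad.card * q ^ l + good.card * q ^ (l - 1) := by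
    rw [hsplit]
    calc ∑ α ∈ S, (inner α).card
        ≤ ∑ α ∈ S, (if p0.eval α = 0 then q ^ l else q ^ (l - 1)) :=
          Finset.sum_le_sum fun α _ => hinner_bound α
      _ = bad.card * q ^ l + good.card * q ^ (l - 1) := by
          rw [Finset.sum_ite, Finset.sum_const, Finset.sum_const, smul_eq_mul, smul_eq_mul]
  have hScard : S.card = q - B.card := by
    rw [hSdef, Finset.card_sdiff_of_subset (Finset.subset_univ B), Finset.card_univ, hq]
  have hSn : q - D - 1 ≤ S.card := by omega
  have hS1 : 1 ≤ S.card := by omega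
  have hdenom : (((S ×ˢ (Finset.univ : Finset (Fin l → F))).card) : ℝ)
      = (S.card : ℝ) * (q : ℝ) ^ l := by
    rw [Finset.card_product, Finset.card_univ, Fintype.card_fun, Fintype.card_fin, hq]
    push_cast
    ring
  rw [hdenom]
  have hqR2 : (2 : ℝ) ≤ (q : ℝ) := by exact_mod_cast hq2
  have hDq : (D : ℝ) + 2 ≤ (q : ℝ) := by exact_mod_cast hD
  have hnR1 : (1 : ℝ) ≤ (S.card : ℝ) := by exact_mod_cast hS1
  have hnRq : (q : ℝ) - (D : ℝ) - 1 ≤ (S.card : ℝ) := by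
    have h := (Nat.cast_le (α := ℝ)).mpr hSn
    rwa [Nat.cast_sub (by omega : 1 ≤ q - D), Nat.cast_sub (by omega : D ≤ q),
      Nat.cast_one] at h
  have hbRD : ((bad.card : ℝ)) ≤ (D : ℝ) := by exact_mod_cast hbadD
  have hbR0 : (0 : ℝ) ≤ (bad.card : ℝ) := Nat.cast_nonneg _
  have hPpos : (0 : ℝ) < (q : ℝ) ^ (l - 1) := by positivity
  have hpowR : ((q : ℝ)) ^ l = (q : ℝ) ^ (l - 1) * (q : ℝ) := by
    rw [← pow_succ]; congr 1; omega
  have hgoodR : ((good.card : ℝ)) = (S.card : ℝ) - (bad.card : ℝ) := by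
    have : ((bad.card : ℝ)) + (good.card : ℝ) = (S.card : ℝ) := by exact_mod_cast hpart
    linarith
  have hcountR : (bigF.card : ℝ) ≤
      (bad.card : ℝ) * ((q : ℝ) ^ (l - 1) * (q : ℝ))
        + ((S.card : ℝ) - (bad.card : ℝ)) * (q : ℝ) ^ (l - 1) := by
    have h1 : (bigF.card : ℝ) ≤
        (bad.card : ℝ) * (q : ℝ) ^ l + (good.card : ℝ) * (q : ℝ) ^ (l - 1) := by
      exact_mod_cast hcount
    rw [hgoodR, hpowR] at h1
    exact h1
  have hdpos : (0 : ℝ) < (S.card : ℝ) * (q : ℝ) ^ l := by positivity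
  rw [div_le_iff₀ hdpos]
  refine le_trans hcountR ?_
  rw [hpowR]
  exact arith_tail _ _ _ _ _ hqR2 hDq hnRq hbRD hbR0 hnR1 hPpos
end

section
/- Let q be a prime power and let F(x) ∈ F_q[x]^{r×s}, G(x) ∈ F_q[x]^{s×l}, H(x) ∈ F_q[x]^{r×l} be matrices of polynomials over F_q with H(x) ≠ F(x)·G(x), and let D be a natural number such that every entry of H(x) and every entry of F(x)·G(x) has degree at most D, with D ≤ q. If γ is drawn uniformly at random from all of F_q and, independently, ν is drawn uniformly at random from F_q^l, then the probability that H(γ)·ν = F(γ)·G(γ)·ν is at most D/q + 1/q − (D/q)·(1/q). -/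
open FiniteField in
lemma aux_card_ker {F : Type*} [Field F] [Fintype F] [DecidableEq F]
    {r l : ℕ} (A : Matrix (Fin r) (Fin l) F) (hA : A ≠ 0) :
    (Finset.univ.filter fun ν : Fin l → F => A.mulVec ν = 0).card
      ≤ Fintype.card F ^ (l - 1) := by
  classical
  have h1 : (Finset.univ.filter fun ν : Fin l → F => A.mulVec ν = 0).card
      = Fintype.card (LinearMap.ker A.mulVecLin) := by
    rw [← Fintype.card_subtype]
    exact Fintype.card_congr (Equiv.subtypeEquivRight fun ν => by
      simp [LinearMap.mem_ker])
  obtain ⟨i, j, hij⟩ : ∃ i j, A i j ≠ 0 := by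
    by_contra h; push_neg at h; exact hA (Matrix.ext fun i j => by simpa using h i j)
  have hker : LinearMap.ker A.mulVecLin ≠ ⊤ := by
    intro htop
    have hmem : (Pi.single j 1 : Fin l → F) ∈ LinearMap.ker A.mulVecLin :=
      htop ▸ Submodule.mem_top
    have h0 : A.mulVec (Pi.single j 1) = 0 := by
      simpa [LinearMap.mem_ker] using hmem
    have := congrFun h0 i
    simp [Matrix.mulVec_single] at this
    exact hij this
  have hfin : Module.finrank F (LinearMap.ker A.mulVecLin) < l := by
    have := Submodule.finrank_lt hker
    simpa [Module.finrank_pi] using this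
  rw [h1, Module.card_eq_pow_finrank (K := F)]
  exact Nat.pow_le_pow_right Fintype.card_pos (Nat.le_sub_one_of_lt hfin)

/-- Missed-detection bound for the modified security check: with
`H(x) ≠ F(x) * G(x)`, all entries of `H(x)` and `F(x) * G(x)` of degree at most `D`,
`D ≤ q`, a uniformly random `γ ∈ F_q` together with an independent uniformly random
`ν ∈ F_q^l` satisfies `H(γ) ν = F(γ) G(γ) ν` with probability at most
`D/q + 1/q - (D/q) * (1/q)`. -/
theorem srpm3_modified_check_missed_detection_bound
    (q r s l D : ℕ) (F : Type*) [Field F] [Fintype F] [DecidableEq F]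
    (hq : Fintype.card F = q)
    (Fp : Matrix (Fin r) (Fin s) (Polynomial F))
    (Gp : Matrix (Fin s) (Fin l) (Polynomial F))
    (Hp : Matrix (Fin r) (Fin l) (Polynomial F))
    (hne : Hp ≠ Fp * Gp)
    (hdegH : ∀ i j, (Hp i j).natDegree ≤ D)
    (hdegFG : ∀ i j, ((Fp * Gp) i j).natDegree ≤ D)
    (hD : D ≤ q) :
    ((((Finset.univ : Finset F) ×ˢ (Finset.univ : Finset (Fin l → F))).filter
        (fun p => (Hp.evalPoly p.1).mulVec p.2 =
          ((Fp.evalPoly p.1) * (Gp.evalPoly p.1)).mulVec p.2)).card : ℝ)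
      / ((((Finset.univ : Finset F) ×ˢ (Finset.univ : Finset (Fin l → F))).card : ℝ))
      ≤ (D : ℝ) / (q : ℝ) + 1 / (q : ℝ) - ((D : ℝ) / (q : ℝ)) * (1 / (q : ℝ)) := by
  classical
  have hq1 : 1 ≤ q := hq ▸ Fintype.card_pos
  set E := Hp - Fp * Gp with hEdef
  have hE0 : E ≠ 0 := sub_ne_zero.mpr hne
  obtain ⟨i0, j0, hij⟩ : ∃ i j, E i j ≠ 0 := by
    by_contra h; push_neg at h; exact hE0 (Matrix.ext fun i j => by simpa using h i j)
  have hl : 1 ≤ l := j0.pos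
  -- rewrite the check condition
  have key : ∀ (γ : F) (ν : Fin l → F),
      ((Hp.evalPoly γ).mulVec ν = ((Fp.evalPoly γ) * (Gp.evalPoly γ)).mulVec ν)
        ↔ (E.evalPoly γ).mulVec ν = 0 := by
    intro γ ν
    have hmul : (Fp.evalPoly γ) * (Gp.evalPoly γ) = (Fp * Gp).evalPoly γ := by
      ext i j
      simp [Matrix.evalPoly, Matrix.mul_apply, Polynomial.eval_finset_sum]
    have hsub : (E.evalPoly γ) = Hp.evalPoly γ - (Fp * Gp).evalPoly γ := by
      ext i j
      simp [Matrix.evalPoly, hEdef, Matrix.sub_apply]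
    rw [hmul, hsub, Matrix.sub_mulVec, sub_eq_zero]
  -- per-γ counts
  set c : F → ℕ := fun γ =>
    (Finset.univ.filter fun ν : Fin l → F => (E.evalPoly γ).mulVec ν = 0).card with hc
  have hNsum : ((((Finset.univ : Finset F) ×ˢ (Finset.univ : Finset (Fin l → F))).filter
      (fun p => (Hp.evalPoly p.1).mulVec p.2 =
        ((Fp.evalPoly p.1) * (Gp.evalPoly p.1)).mulVec p.2)).card) = ∑ γ : F, c γ := by
    rw [Finset.card_filter, Finset.sum_product]
    refine Finset.sum_congr rfl fun γ _ => ?_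
    simp only [hc, Finset.card_filter]
    refine Finset.sum_congr rfl fun ν _ => ?_
    simp [key γ ν]
  -- bad set
  set B := (Finset.univ : Finset F).filter (fun γ => E.evalPoly γ = 0) with hB
  set Bn := (Finset.univ : Finset F).filter (fun γ => ¬ E.evalPoly γ = 0) with hBn
  have hsplit : B.card + Bn.card = q := by
    rw [hB, hBn, Finset.card_filter_add_card_filter_not]
    simpa using hq
  have hBcard : B.card ≤ D := by
    have hsubB : B ⊆ (E i0 j0).roots.toFinset := by
      intro γ hγ
      have h2 := (Finset.mem_filter.mp hγ).2
      have h3 : (E i0 j0).eval γ = 0 := by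
        have := congrFun (congrFun h2 i0) j0
        simpa [Matrix.evalPoly] using this
      simp [Multiset.mem_toFinset, Polynomial.mem_roots', hij, Polynomial.IsRoot, h3]
    calc B.card ≤ (E i0 j0).roots.toFinset.card := Finset.card_le_card hsubB
      _ ≤ Multiset.card (E i0 j0).roots := Multiset.toFinset_card_le _
      _ ≤ (E i0 j0).natDegree := Polynomial.card_roots' _
      _ ≤ D := by
          have h4 : E i0 j0 = Hp i0 j0 - (Fp * Gp) i0 j0 := by
            simp [hEdef, Matrix.sub_apply]
          rw [h4]
          exact le_trans (Polynomial.natDegree_sub_le _ _)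
            (max_le (hdegH _ _) (hdegFG _ _))
  -- sum bound
  have hcB : ∀ γ, c γ ≤ q ^ l := fun γ => by
    rw [hc]
    calc (Finset.univ.filter fun ν : Fin l → F => (E.evalPoly γ).mulVec ν = 0).card
        ≤ (Finset.univ : Finset (Fin l → F)).card := Finset.card_filter_le _ _
      _ = q ^ l := by simp [Fintype.card_fun, hq]
  have hcBn : ∀ γ ∈ Bn, c γ ≤ q ^ (l - 1) := fun γ hγ => by
    have hA : E.evalPoly γ ≠ 0 := (Finset.mem_filter.mp hγ).2
    have := aux_card_ker (E.evalPoly γ) hA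
    rwa [hq] at this
  have hsum : ∑ γ : F, c γ ≤ B.card * q ^ l + Bn.card * q ^ (l - 1) := by
    rw [← Finset.sum_filter_add_sum_filter_not Finset.univ (fun γ => E.evalPoly γ = 0)]
    refine add_le_add ?_ ?_
    · calc ∑ γ ∈ B, c γ ≤ ∑ γ ∈ B, q ^ l := Finset.sum_le_sum fun γ _ => hcB γ
        _ = B.card * q ^ l := by rw [Finset.sum_const, smul_eq_mul]
    · calc ∑ γ ∈ Bn, c γ ≤ ∑ γ ∈ Bn, q ^ (l - 1) := Finset.sum_le_sum hcBn
        _ = Bn.card * q ^ (l - 1) := by rw [Finset.sum_const, smul_eq_mul]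
  -- move to ℝ
  have hden : (((Finset.univ : Finset F) ×ˢ (Finset.univ : Finset (Fin l → F))).card) = q ^ (l + 1) := by
    simp [Finset.card_product, Fintype.card_fun, hq]
    ring
  rw [hNsum, hden]
  have hQ1 : (1 : ℝ) ≤ (q : ℝ) := by exact_mod_cast hq1
  have hQ0 : (0 : ℝ) < (q : ℝ) := by linarith
  rw [div_le_iff₀ (by positivity)]
  set P : ℝ := (q : ℝ) ^ (l - 1) with hP
  have hP0 : (0 : ℝ) ≤ P := by positivity
  have hpow : ((q : ℝ)) ^ (l + 1) = (q : ℝ) * (q : ℝ) * P := by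
    rw [hP]
    have h5 : l + 1 = (l - 1) + 2 := by omega
    rw [h5, pow_add]
    ring
  have hpowl : ((q : ℝ)) ^ l = (q : ℝ) * P := by
    rw [hP]
    have h5 : l = (l - 1) + 1 := by omega
    conv_lhs => rw [h5]
    rw [pow_succ]
    ring
  have hNle : ((∑ γ : F, c γ : ℕ) : ℝ) ≤ (B.card : ℝ) * ((q : ℝ) * P) + (Bn.card : ℝ) * P := by
    have := hsum
    have hcast : ((∑ γ : F, c γ : ℕ) : ℝ) ≤ ((B.card * q ^ l + Bn.card * q ^ (l - 1) : ℕ) : ℝ) := by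
      exact_mod_cast this
    calc ((∑ γ : F, c γ : ℕ) : ℝ) ≤ ((B.card * q ^ l + Bn.card * q ^ (l - 1) : ℕ) : ℝ) := hcast
      _ = (B.card : ℝ) * ((q : ℝ) * P) + (Bn.card : ℝ) * P := by
          push_cast
          rw [hpowl, hP]
  have hb : (B.card : ℝ) ≤ (D : ℝ) := by exact_mod_cast hBcard
  have hbn : (Bn.card : ℝ) = (q : ℝ) - (B.card : ℝ) := by
    have : (B.card : ℝ) + (Bn.card : ℝ) = (q : ℝ) := by exact_mod_cast hsplit
    linarith
  have hDq : (D : ℝ) ≤ (q : ℝ) := by exact_mod_cast hD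
  have hcast2 : ((q ^ (l + 1) : ℕ) : ℝ) = (q : ℝ) * (q : ℝ) * P := by
    push_cast; exact hpow
  rw [hcast2]
  have hgoal : ((D : ℝ) / q + 1 / q - (D : ℝ) / q * (1 / q)) * ((q : ℝ) * (q : ℝ) * P)
      = (D : ℝ) * (q : ℝ) * P + (q : ℝ) * P - (D : ℝ) * P := by
    field_simp
  rw [hgoal]
  have hkey2 : (B.card : ℝ) * ((q : ℝ) - 1) * P ≤ (D : ℝ) * ((q : ℝ) - 1) * P := by
    have h6 : (0 : ℝ) ≤ (q : ℝ) - 1 := by linarith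
    have := mul_le_mul_of_nonneg_right (mul_le_mul_of_nonneg_right hb h6) hP0
    linarith
  nlinarith [hNle, hbn, hkey2]
end

section
/- Let F be a field, let z, d ≥ 1, let α_1, …, α_{z+d} be distinct elements of F, and let l_i(x) = ∏_{k ∈ [z+d], k ≠ i} (x − α_k)/(α_i − α_k) for i ∈ [z+d] be the associated Lagrange basis polynomials. Let β_1, …, β_z be distinct elements of F, none of which equals any α_k. Then the z×z matrix M over F with entries M_{j,i} = l_i(β_j) for i, j ∈ [z] is invertible. -/
/-- Key algebraic step of SRPM3's privacy proof: for distinct points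
`α_1, …, α_{z+d}` with Lagrange basis polynomials `l_i`, and distinct points
`β_1, …, β_z` avoiding all `α_k`, the `z × z` matrix `M` with `M_{j,i} = l_i(β_j)`
(for `i, j ∈ [z]`) is invertible. -/
theorem srpm3_lagrange_mask_matrix_invertible
    (F : Type*) [Field F] (z d : ℕ) (hz : 1 ≤ z) (hd : 1 ≤ d)
    (α : Fin (z + d) → F) (hα : Function.Injective α)
    (lp : Fin (z + d) → Polynomial F)
    (hlp : ∀ i, lp i = ∏ k ∈ Finset.univ.erase i,
        Polynomial.C (α i - α k)⁻¹ * (Polynomial.X - Polynomial.C (α k)))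
    (β : Fin z → F) (hβ : Function.Injective β)
    (hβα : ∀ j k, β j ≠ α k)
    (M : Matrix (Fin z) (Fin z) F)
    (hM : ∀ j i, M j i = (lp (Fin.castAdd d i)).eval (β j)) :
    IsUnit M := by
  classical
  have hlp' : ∀ i, lp i = Lagrange.basis Finset.univ α i := by
    intro i; rw [hlp]; rfl
  have hαinj : Set.InjOn α (Finset.univ : Finset (Fin (z + d))) :=
    fun a _ b _ h => hα h
  rw [Matrix.isUnit_iff_isUnit_det, isUnit_iff_ne_zero]
  intro hdet
  obtain ⟨v, hv, hMv⟩ := Matrix.exists_mulVec_eq_zero_iff.mpr hdet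
  set p : Polynomial F := ∑ i : Fin z, Polynomial.C (v i) * lp (Fin.castAdd d i) with hp
  -- degree bound
  have hdeg : p.natDegree < z + d := by
    have h1 : 0 < z + d := by omega
    refine lt_of_le_of_lt (Polynomial.natDegree_sum_le _ _) ?_
    rw [Finset.fold_max_lt]
    refine ⟨h1, fun i _ => ?_⟩
    refine lt_of_le_of_lt (Polynomial.natDegree_mul_le) ?_
    rw [Polynomial.natDegree_C, hlp' (Fin.castAdd d i),
      Lagrange.natDegree_basis hαinj (Finset.mem_univ _)]
    simp only [Finset.card_univ, Fintype.card_fin]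
    omega
  -- roots
  have hr : ∀ t : Fin (z + d), p.eval (Fin.addCases (motive := fun _ => F) β
      (fun k => α (Fin.natAdd z k)) t) = 0 := by
    intro t
    refine Fin.addCases ?_ ?_ t
    · intro j
      simp only [Fin.addCases_left]
      have := congrFun hMv j
      simp only [Matrix.mulVec, dotProduct, Pi.zero_apply] at this
      rw [hp, Polynomial.eval_finset_sum]
      rw [← this]
      refine Finset.sum_congr rfl fun i _ => ?_
      rw [Polynomial.eval_mul, Polynomial.eval_C, hM]
      ring
    · intro k
      simp only [Fin.addCases_right]
      rw [hp, Polynomial.eval_finset_sum]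
      refine Finset.sum_eq_zero fun i _ => ?_
      rw [Polynomial.eval_mul, hlp',
        Lagrange.eval_basis_of_ne (v := α) (s := Finset.univ)
          (by simp [Fin.ext_iff, Fin.castAdd, Fin.natAdd]; omega) (Finset.mem_univ _)]
      ring
  -- injectivity of the root family
  have hrinj : Function.Injective (fun t : Fin (z + d) =>
      Fin.addCases (motive := fun _ => F) β (fun k => α (Fin.natAdd z k)) t) := by
    have hcases : ∀ t : Fin (z + d),
        (∃ j, t = Fin.castAdd d j) ∨ (∃ k, t = Fin.natAdd z k) := by
      intro t
      refine Fin.addCases (fun j => Or.inl ⟨j, rfl⟩) (fun k => Or.inr ⟨k, rfl⟩) t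
    intro a b hab
    rcases hcases a with ⟨a', rfl⟩ | ⟨a', rfl⟩ <;>
      rcases hcases b with ⟨b', rfl⟩ | ⟨b', rfl⟩ <;>
      simp only [Fin.addCases_left, Fin.addCases_right] at hab
    · exact congrArg _ (hβ hab)
    · exact absurd hab (hβα a' _)
    · exact absurd hab.symm (hβα b' _)
    · exact hα hab
  have hp0 : p = 0 := by
    refine Polynomial.eq_zero_of_natDegree_lt_card_of_eval_eq_zero p hrinj hr ?_
    simpa using hdeg
  -- conclude v = 0
  apply hv
  funext i
  have : p.eval (α (Fin.castAdd d i)) = v i := by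
    rw [hp, Polynomial.eval_finset_sum]
    rw [Finset.sum_eq_single i]
    · rw [Polynomial.eval_mul, Polynomial.eval_C, hlp',
        Lagrange.eval_basis_self hαinj (Finset.mem_univ _), mul_one]
    · intro b _ hbi
      rw [Polynomial.eval_mul, hlp',
        Lagrange.eval_basis_of_ne (fun h => hbi (by
          simpa [Fin.ext_iff] using h)) (Finset.mem_univ _)]
      ring
    · intro h; exact absurd (Finset.mem_univ i) h
  rw [hp0] at this
  simpa using this.symm
end

section
/- Let q ≥ 2 and D be natural numbers with 2D + 1 ≤ q, let S be a finite set with q − D − 1 ≤ |S| ≤ q, let R ⊆ S with |R| ≤ D, and let 1 ≤ η ≤ q − D − 1. Then Σ_{j=0}^{η} [ C(|R|, j) · C(|S| − |R|, η − j) / C(|S|, η) ] · (1/q)^(η − j) ≤ Σ_{j=0}^{η} [ C(D, j) · C(q − 2D − 1, η − j) / C(q − D − 1, η) ] · (1/q)^(η − j), where C(n, k) denotes the binomial coefficient. -/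
open Finset

/-- Symmetric subset-of-subset identity. -/
lemma choose_swap (M a b : ℕ) :
    M.choose a * (M - a).choose b = M.choose b * (M - b).choose a := by
  rcases le_or_gt (a + b) M with h | h
  · have h1 := Nat.choose_mul (n := M) (k := a + b) (s := a) (Nat.le_add_right a b)
    have h2 := Nat.choose_mul (n := M) (k := a + b) (s := b) (Nat.le_add_left b a)
    have hsymm : (a + b).choose a = (a + b).choose b := Nat.choose_symm_add
    have e1 : a + b - a = b := by omega
    have e2 : a + b - b = a := by omega
    rw [e1] at h1; rw [e2] at h2
    rw [← h1, ← h2, hsymm]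
  · rcases le_or_gt a M with ha | ha
    · rcases le_or_gt b M with hb | hb
      · have z1 : (M - a).choose b = 0 := Nat.choose_eq_zero_of_lt (by omega)
        have z2 : (M - b).choose a = 0 := Nat.choose_eq_zero_of_lt (by omega)
        rw [z1, z2]; ring
      · have z1 : M.choose b = 0 := Nat.choose_eq_zero_of_lt hb
        have z2 : (M - a).choose b = 0 := Nat.choose_eq_zero_of_lt (by omega)
        rw [z1, z2]; ring
    · have z1 : M.choose a = 0 := Nat.choose_eq_zero_of_lt ha
      have z2 : (M - b).choose a = 0 := Nat.choose_eq_zero_of_lt (by omega)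
      rw [z1, z2]; ring

/-- Trinomial revision for the hypergeometric symmetry. -/
lemma tri_identity (N K n j : ℕ) (hK : K ≤ N) (hn : n ≤ N) (hjK : j ≤ K) (hjn : j ≤ n) :
    K.choose j * (N - K).choose (n - j) * N.choose K
      = n.choose j * (N - n).choose (K - j) * N.choose n := by
  have h1 : N.choose K * K.choose j = N.choose j * (N - j).choose (K - j) :=
    Nat.choose_mul hjK
  have h2 : N.choose n * n.choose j = N.choose j * (N - j).choose (n - j) :=
    Nat.choose_mul hjn
  have h3 := choose_swap (N - j) (K - j) (n - j)
  have e1 : N - j - (K - j) = N - K := by omega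
  have e2 : N - j - (n - j) = N - n := by omega
  rw [e1, e2] at h3
  calc K.choose j * (N - K).choose (n - j) * N.choose K
      = (N.choose K * K.choose j) * (N - K).choose (n - j) := by ring
    _ = (N.choose j * (N - j).choose (K - j)) * (N - K).choose (n - j) := by rw [h1]
    _ = N.choose j * ((N - j).choose (K - j) * (N - K).choose (n - j)) := by ring
    _ = N.choose j * ((N - j).choose (n - j) * (N - n).choose (K - j)) := by rw [h3]
    _ = (N.choose j * (N - j).choose (n - j)) * (N - n).choose (K - j) := by ring
    _ = (N.choose n * n.choose j) * (N - n).choose (K - j) := by rw [← h2]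
    _ = n.choose j * (N - n).choose (K - j) * N.choose n := by ring

/-- Unnormalized hypergeometric expectation sum. -/
noncomputable def hsumN (f : ℕ → ℝ) (N K n : ℕ) : ℝ :=
  ∑ j ∈ Finset.range (n + 1), ((K.choose j : ℝ) * ((N - K).choose (n - j) : ℝ)) * f j

lemma splitA (f : ℕ → ℝ) (K M n : ℕ) :
    ∑ j ∈ Finset.range (n + 1), ((K.choose j : ℝ) * ((M + 1).choose (n - j) : ℝ)) * f j
      = (∑ j ∈ Finset.range (n + 1), ((K.choose j : ℝ) * (M.choose (n - j) : ℝ)) * f j)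
        + ∑ j ∈ Finset.range n, ((K.choose j : ℝ) * (M.choose (n - 1 - j) : ℝ)) * f j := by
  rw [Finset.sum_range_succ, Finset.sum_range_succ
    (fun j => ((K.choose j : ℝ) * (M.choose (n - j) : ℝ)) * f j)]
  have key : ∀ j ∈ Finset.range n,
      ((K.choose j : ℝ) * ((M + 1).choose (n - j) : ℝ)) * f j
      = ((K.choose j : ℝ) * (M.choose (n - j) : ℝ)) * f j
        + ((K.choose j : ℝ) * (M.choose (n - 1 - j) : ℝ)) * f j := by
    intro j hj
    rw [Finset.mem_range] at hj
    have h : n - j = (n - 1 - j) + 1 := by omega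
    rw [h, Nat.choose_succ_succ']
    push_cast; ring
  rw [Finset.sum_congr rfl key, Finset.sum_add_distrib]
  simp [Nat.sub_self]
  ring

lemma splitB (f : ℕ → ℝ) (K M n : ℕ) :
    ∑ j ∈ Finset.range (n + 1), (((K + 1).choose j : ℝ) * (M.choose (n - j) : ℝ)) * f j
      = (∑ j ∈ Finset.range (n + 1), ((K.choose j : ℝ) * (M.choose (n - j) : ℝ)) * f j)
        + ∑ j ∈ Finset.range n, ((K.choose j : ℝ) * (M.choose (n - 1 - j) : ℝ)) * f (j + 1) := by
  rw [Finset.sum_range_succ' _ n, Finset.sum_range_succ'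
    (fun j => ((K.choose j : ℝ) * (M.choose (n - j) : ℝ)) * f j) n]
  have key : ∀ j ∈ Finset.range n,
      (((K + 1).choose (j + 1) : ℝ) * (M.choose (n - (j + 1)) : ℝ)) * f (j + 1)
      = ((K.choose (j + 1) : ℝ) * (M.choose (n - (j + 1)) : ℝ)) * f (j + 1)
        + ((K.choose j : ℝ) * (M.choose (n - 1 - j) : ℝ)) * f (j + 1) := by
    intro j hj
    have h : n - (j + 1) = n - 1 - j := by omega
    rw [Nat.choose_succ_succ', h]
    push_cast; ring
  rw [Finset.sum_congr rfl key, Finset.sum_add_distrib]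
  simp
  ring

lemma step_K (f : ℕ → ℝ) (hf : ∀ j, f j ≤ f (j + 1)) (hf0 : ∀ j, 0 ≤ f j)
    (N K n : ℕ) (hK : K < N) :
    hsumN f N K n ≤ hsumN f N (K + 1) n := by
  have hMK : N - K = (N - (K + 1)) + 1 := by omega
  set M := N - (K + 1) with hM
  unfold hsumN
  rw [hMK, splitA f K M n, splitB f K M n]
  have : ∑ j ∈ Finset.range n, ((K.choose j : ℝ) * (M.choose (n - 1 - j) : ℝ)) * f j
      ≤ ∑ j ∈ Finset.range n, ((K.choose j : ℝ) * (M.choose (n - 1 - j) : ℝ)) * f (j + 1) := by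
    apply Finset.sum_le_sum
    intro j _
    exact mul_le_mul_of_nonneg_left (hf j) (by positivity)
  linarith

/-- Hypergeometric K ↔ n symmetry for the expectation. -/
lemma hsym (f : ℕ → ℝ) (N K n : ℕ) (hK : K ≤ N) (hn : n ≤ N) :
    hsumN f N K n / (N.choose n : ℝ) = hsumN f N n K / (N.choose K : ℝ) := by
  have hc1 : (0 : ℝ) < (N.choose n : ℝ) := by exact_mod_cast Nat.choose_pos hn
  have hc2 : (0 : ℝ) < (N.choose K : ℝ) := by exact_mod_cast Nat.choose_pos hK
  rw [div_eq_div_iff hc1.ne' hc2.ne']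
  unfold hsumN
  rw [Finset.sum_mul, Finset.sum_mul]
  set m := min n K with hm
  have hsub1 : Finset.range (m + 1) ⊆ Finset.range (n + 1) :=
    Finset.range_subset_range.mpr (by omega)
  have hsub2 : Finset.range (m + 1) ⊆ Finset.range (K + 1) :=
    Finset.range_subset_range.mpr (by omega)
  rw [← Finset.sum_subset hsub1 (by
    intro j hj hj2
    rw [Finset.mem_range] at hj
    rw [Finset.mem_range] at hj2
    have : K.choose j = 0 := Nat.choose_eq_zero_of_lt (by omega)
    rw [this]; push_cast; ring)]
  rw [← Finset.sum_subset hsub2 (by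
    intro j hj hj2
    rw [Finset.mem_range] at hj
    rw [Finset.mem_range] at hj2
    have : n.choose j = 0 := Nat.choose_eq_zero_of_lt (by omega)
    rw [this]; push_cast; ring)]
  apply Finset.sum_congr rfl
  intro j hj
  rw [Finset.mem_range] at hj
  have htri := tri_identity N K n j hK hn (by omega) (by omega)
  have htri' : ((K.choose j : ℝ) * ((N - K).choose (n - j) : ℝ)) * (N.choose K : ℝ)
      = ((n.choose j : ℝ) * ((N - n).choose (K - j) : ℝ)) * (N.choose n : ℝ) := by
    exact_mod_cast htri
  calc ((K.choose j : ℝ) * ((N - K).choose (n - j) : ℝ)) * f j * (N.choose K : ℝ)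
      = ((K.choose j : ℝ) * ((N - K).choose (n - j) : ℝ)) * (N.choose K : ℝ) * f j := by ring
    _ = ((n.choose j : ℝ) * ((N - n).choose (K - j) : ℝ)) * (N.choose n : ℝ) * f j := by
        rw [htri']
    _ = ((n.choose j : ℝ) * ((N - n).choose (K - j) : ℝ)) * f j * (N.choose n : ℝ) := by ring

lemma mono_draws (f : ℕ → ℝ) (hf : ∀ j, f j ≤ f (j + 1)) (hf0 : ∀ j, 0 ≤ f j)
    (N K n : ℕ) (hK : K ≤ N) (hn : n < N) :
    hsumN f N K n / (N.choose n : ℝ) ≤ hsumN f N K (n + 1) / (N.choose (n + 1) : ℝ) := by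
  rw [hsym f N K n hK hn.le, hsym f N K (n + 1) hK hn]
  have hc : (0 : ℝ) < (N.choose K : ℝ) := by exact_mod_cast Nat.choose_pos hK
  exact div_le_div_of_nonneg_right (step_K f hf hf0 N n K hn) hc.le |>.trans_eq rfl

lemma step_N (f : ℕ → ℝ) (hf : ∀ j, f j ≤ f (j + 1)) (hf0 : ∀ j, 0 ≤ f j)
    (N K n : ℕ) (hK : K ≤ N) (hn1 : 1 ≤ n) (hnN : n ≤ N) :
    hsumN f (N + 1) K n / ((N + 1).choose n : ℝ) ≤ hsumN f N K n / (N.choose n : ℝ) := by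
  obtain ⟨m, rfl⟩ : ∃ m, n = m + 1 := ⟨n - 1, by omega⟩
  have hdec : hsumN f (N + 1) K (m + 1) = hsumN f N K (m + 1) + hsumN f N K m := by
    unfold hsumN
    have hMK : N + 1 - K = (N - K) + 1 := by omega
    rw [hMK, splitA f K (N - K) (m + 1)]
    have e : ∀ j, m + 1 - 1 - j = m - j := fun j => by omega
    simp only [e, Nat.add_sub_cancel]
  have hch : ((N + 1).choose (m + 1) : ℝ) = (N.choose (m + 1) : ℝ) + (N.choose m : ℝ) := by
    have := Nat.choose_succ_succ' N m
    push_cast [this]; ring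
  have hc1 : (0 : ℝ) < (N.choose (m + 1) : ℝ) := by
    exact_mod_cast Nat.choose_pos (by omega : m + 1 ≤ N)
  have hc2 : (0 : ℝ) < (N.choose m : ℝ) := by
    exact_mod_cast Nat.choose_pos (by omega : m ≤ N)
  have hE : hsumN f N K m / (N.choose m : ℝ)
      ≤ hsumN f N K (m + 1) / (N.choose (m + 1) : ℝ) :=
    mono_draws f hf hf0 N K m hK (by omega)
  rw [hdec, hch]
  rw [div_le_div_iff₀ (by linarith) hc1]
  have hE' := (div_le_div_iff₀ hc2 hc1).mp hE
  nlinarith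

lemma chain_K (f : ℕ → ℝ) (hf : ∀ j, f j ≤ f (j + 1)) (hf0 : ∀ j, 0 ≤ f j)
    (N n K K' : ℕ) (h : K ≤ K') (hN : K' ≤ N) :
    hsumN f N K n ≤ hsumN f N K' n := by
  induction K', h using Nat.le_induction with
  | base => exact le_refl _
  | succ K' hK' ih =>
      exact le_trans (ih (by omega)) (step_K f hf hf0 N K' n (by omega))

lemma chain_N (f : ℕ → ℝ) (hf : ∀ j, f j ≤ f (j + 1)) (hf0 : ∀ j, 0 ≤ f j)
    (K n N₀ : ℕ) (hK : K ≤ N₀) (hn1 : 1 ≤ n) (hn : n ≤ N₀) (N : ℕ) (hN : N₀ ≤ N) :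
    hsumN f N K n / (N.choose n : ℝ) ≤ hsumN f N₀ K n / (N₀.choose n : ℝ) := by
  induction N, hN using Nat.le_induction with
  | base => exact le_refl _
  | succ N hN ih =>
      exact le_trans (step_N f hf hf0 N K n (by omega) hn1 (by omega)) ih

/-- Monotonicity of the hypergeometric missed-detection bound: with
`q ≥ 2`, `2D + 1 ≤ q`, `q - D - 1 ≤ |S| ≤ q`, `R ⊆ S`, `|R| ≤ D`, and
`1 ≤ η ≤ q - D - 1`, the hypergeometric sum with parameters `(|R|, |S|)` is at most
the one with parameters `(D, q - D - 1)`. -/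
theorem repeated_check_bound_monotone
    {α : Type*} [DecidableEq α] (q D : ℕ) (hq : 2 ≤ q) (hD : 2 * D + 1 ≤ q)
    (S R : Finset α) (hRS : R ⊆ S) (hR : R.card ≤ D)
    (hS1 : q - D - 1 ≤ S.card) (hS2 : S.card ≤ q)
    (η : ℕ) (hη1 : 1 ≤ η) (hη2 : η ≤ q - D - 1) :
    ∑ j ∈ Finset.range (η + 1),
        ((R.card.choose j : ℝ) * (((S.card - R.card).choose (η - j) : ℕ) : ℝ)
            / ((S.card.choose η : ℕ) : ℝ))
          * ((1 : ℝ) / (q : ℝ)) ^ (η - j)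
    ≤ ∑ j ∈ Finset.range (η + 1),
        ((D.choose j : ℝ) * (((q - 2 * D - 1).choose (η - j) : ℕ) : ℝ)
            / (((q - D - 1).choose η : ℕ) : ℝ))
          * ((1 : ℝ) / (q : ℝ)) ^ (η - j) := by
  set s := S.card with hs
  set r := R.card with hr
  set f : ℕ → ℝ := fun j => ((1 : ℝ) / (q : ℝ)) ^ (η - j) with hfdef
  have hq0 : (0 : ℝ) < (q : ℝ) := by positivity
  have ht0 : (0 : ℝ) ≤ 1 / (q : ℝ) := by positivity
  have ht1 : 1 / (q : ℝ) ≤ 1 := by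
    rw [div_le_one hq0]; exact_mod_cast hq.trans' (by norm_num)
  have hf : ∀ j, f j ≤ f (j + 1) := by
    intro j
    exact pow_le_pow_of_le_one ht0 ht1 (by omega)
  have hf0 : ∀ j, 0 ≤ f j := fun j => by positivity
  have hDs : D ≤ s := by omega
  have hηs : η ≤ s := by omega
  have hDq : D ≤ q - D - 1 := by omega
  have heL : (∑ j ∈ Finset.range (η + 1),
        ((r.choose j : ℝ) * (((s - r).choose (η - j) : ℕ) : ℝ)
            / ((s.choose η : ℕ) : ℝ))
          * ((1 : ℝ) / (q : ℝ)) ^ (η - j)) = hsumN f s r η / (s.choose η : ℝ) := by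
    unfold hsumN
    rw [Finset.sum_div]
    exact Finset.sum_congr rfl fun j _ => by simp only [hfdef]; ring
  have heR : (∑ j ∈ Finset.range (η + 1),
        ((D.choose j : ℝ) * (((q - 2 * D - 1).choose (η - j) : ℕ) : ℝ)
            / (((q - D - 1).choose η : ℕ) : ℝ))
          * ((1 : ℝ) / (q : ℝ)) ^ (η - j))
      = hsumN f (q - D - 1) D η / ((q - D - 1).choose η : ℝ) := by
    unfold hsumN
    have e : q - D - 1 - D = q - 2 * D - 1 := by omega
    rw [e, Finset.sum_div]
    exact Finset.sum_congr rfl fun j _ => by simp only [hfdef]; ring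
  rw [heL, heR]
  have h1 : hsumN f s r η / (s.choose η : ℝ) ≤ hsumN f s D η / (s.choose η : ℝ) := by
    apply div_le_div_of_nonneg_right ?_ ?_ |>.trans_eq rfl
    · exact chain_K f hf hf0 s η r D hR hDs
    · exact le_of_lt (by exact_mod_cast Nat.choose_pos hηs)
  exact h1.trans (chain_N f hf hf0 D η (q - D - 1) hDq hη1 hη2 s hS1)
end
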